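/- Consider a switched matrix-weighted network on n nodes: for each k ∈ ℕ let L^k be a matrix-valued Laplacian (symmetric positive semidefinite with R ⊆ null(L^k)) and let the dwell times satisfy Δt_k ∈ [α, β] with 0 < α ≤ β. Suppose there exists a strictly increasing sequence of indices k_0 = 0 < k_1 < k_2 < ⋯ such that for every l ∈ ℕ the null space of Σ_{k=k_l}^{k_{l+1}−1} Δt_k L^k equals R, and suppose there exists 0 < q < 1 such that for every l, the transition matrix Φ_l = exp(−Δt_{k_{l+1}−1} L^{k_{l+1}−1}) ··· exp(−Δt_{k_l} L^{k_l}) satisfies ‖Φ_l x‖² ≤ q ‖x‖² for every x orthogonal to R (i.e., μ_{d+1}(Φ_l^T Φ_l) ≤ q). Then for every initial state x_0 ∈ ℝ^{dn}, the sequence defined by x_{k+1} = exp(−Δt_k L^k) x_k converges to the average consensus value x_f = 1_n ⊗ ((1/n) Σ_{i=1}^n (x_0)_i). -/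

import Mathlib

open Matrix Finset Filter

/-- The matrix-valued Laplacian of a matrix-weighted graph on `n` nodes with
state dimension `d`: the `(i,j)` off-diagonal block is `-A i j` and the `i`-th
diagonal block is `∑ k ≠ i, A i k`. -/
noncomputable def mwLaplacian {n d : ℕ} (A : Fin n → Fin n → Matrix (Fin d) (Fin d) ℝ) :
    Matrix (Fin n × Fin d) (Fin n × Fin d) ℝ :=
  fun p q =>
    if p.1 = q.1 then ∑ k ∈ Finset.univ.erase p.1, A p.1 k p.2 q.2
    else -(A p.1 q.1 p.2 q.2)

/-- Membership in the consensus subspace `R = range (1ₙ ⊗ I_d)`: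
all blocks of `x` are equal. -/
def isConsensus {n d : ℕ} (x : Fin n × Fin d → ℝ) : Prop :=
  ∃ v : Fin d → ℝ, ∀ p : Fin n × Fin d, x p = v p.2

/-- The Euclidean norm on `ι → ℝ`. -/
noncomputable def euclNorm {ι : Type*} [Fintype ι] (x : ι → ℝ) : ℝ :=
  Real.sqrt (x ⬝ᵥ x)

/-- The state of the switched system at switching instants:
`x_0 = x0`, `x_{k+1} = E k ⬝ x_k`. -/
noncomputable def stateSeq {ι : Type*} [Fintype ι] [DecidableEq ι]
    (E : ℕ → Matrix ι ι ℝ) (x0 : ι → ℝ) : ℕ → ι → ℝ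
  | 0 => x0
  | k + 1 => (E k).mulVec (stateSeq E x0 k)

/-- The transition matrix `E (a+j-1) * ⋯ * E (a+1) * E a` (the ordered product of
`j` consecutive factors starting at index `a`). -/
noncomputable def transMat {ι : Type*} [Fintype ι] [DecidableEq ι]
    (E : ℕ → Matrix ι ι ℝ) (a : ℕ) : ℕ → Matrix ι ι ℝ
  | 0 => 1
  | j + 1 => E (a + j) * transMat E a j

section Aux

variable {ι : Type*} [Fintype ι] [DecidableEq ι]

omit [DecidableEq ι] in
lemma dot_mulVec_same (A : Matrix ι ι ℝ) (x : ι → ℝ) :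
    (A *ᵥ x) ⬝ᵥ (A *ᵥ x) = x ⬝ᵥ ((Aᵀ * A) *ᵥ x) := by
  rw [Matrix.dotProduct_mulVec, ← Matrix.mulVec_mulVec, Matrix.mulVec_transpose,
    dotProduct_comm]

omit [DecidableEq ι] in
lemma dot_mulVec_left (A : Matrix ι ι ℝ) (x y : ι → ℝ) :
    (A *ᵥ x) ⬝ᵥ y = x ⬝ᵥ (Aᵀ *ᵥ y) := by
  rw [dotProduct_comm, Matrix.dotProduct_mulVec, ← Matrix.mulVec_transpose,
    dotProduct_comm]

/-- exp fixes vectors in the kernel. -/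
lemma exp_mulVec_of_mulVec_eq_zero (M : Matrix ι ι ℝ) (c : ι → ℝ)
    (h : M *ᵥ c = 0) : (NormedSpace.exp M) *ᵥ c = c := by
  letI : SeminormedRing (Matrix ι ι ℝ) := Matrix.linftyOpSemiNormedRing
  letI : NormedRing (Matrix ι ι ℝ) := Matrix.linftyOpNormedRing
  letI : NormedAlgebra ℝ (Matrix ι ι ℝ) := Matrix.linftyOpNormedAlgebra
  let f : Matrix ι ι ℝ →ₗ[ℝ] (ι → ℝ) :=
    { toFun := fun A => A *ᵥ c
      map_add' := fun A B => Matrix.add_mulVec A B c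
      map_smul' := fun r A => Matrix.smul_mulVec r A c }
  have hf : Continuous f := f.continuous_of_finiteDimensional
  have hs : Summable fun k : ℕ => ((k.factorial : ℝ)⁻¹) • M ^ k :=
    NormedSpace.expSeries_summable' M
  have hexp : NormedSpace.exp M = ∑' k : ℕ, ((k.factorial : ℝ)⁻¹) • M ^ k := by
    rw [NormedSpace.exp_eq_tsum ℝ]
  have key : (NormedSpace.exp M) *ᵥ c
      = ∑' k : ℕ, ((k.factorial : ℝ)⁻¹) • (M ^ k *ᵥ c) := by
    have : f (NormedSpace.exp M) = ∑' k : ℕ, f (((k.factorial : ℝ)⁻¹) • M ^ k) := by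
      rw [hexp]
      exact ((LinearMap.toContinuousLinearMap f).map_tsum hs)
    simpa [f, Matrix.smul_mulVec] using this
  rw [key, tsum_eq_single 0]
  · simp
  · intro k hk
    obtain ⟨j, rfl⟩ := Nat.exists_eq_succ_of_ne_zero hk
    rw [pow_succ, ← Matrix.mulVec_mulVec, h, Matrix.mulVec_zero, smul_zero]

lemma exp_neg_psd_nonexpansive {M : Matrix ι ι ℝ} (hM : M.PosSemidef) (x : ι → ℝ) :
    ((NormedSpace.exp (-M)) *ᵥ x) ⬝ᵥ ((NormedSpace.exp (-M)) *ᵥ x) ≤ x ⬝ᵥ x := by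
  have hH : M.IsHermitian := hM.1
  set U : Matrix ι ι ℝ := (hH.eigenvectorUnitary : Matrix ι ι ℝ) with hU
  have hsU : star U * U = 1 := Matrix.mem_unitaryGroup_iff'.mp hH.eigenvectorUnitary.2
  have hUs : U * star U = 1 := Matrix.mem_unitaryGroup_iff.mp hH.eigenvectorUnitary.2
  have hUinv : U⁻¹ = star U := Matrix.inv_eq_left_inv hsU
  have hneg : -M = U * Matrix.diagonal (fun i => -(hH.eigenvalues i)) * U⁻¹ := by
    rw [hUinv]
    conv_lhs => rw [hH.spectral_theorem]
    simp [← Matrix.diagonal_neg, Matrix.mul_neg, Matrix.neg_mul,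
      RCLike.ofReal_real_eq_id, Function.comp_def, ← hU]
  have hexp : NormedSpace.exp (-M)
      = U * Matrix.diagonal (fun i => Real.exp (-(hH.eigenvalues i))) * star U := by
    rw [hneg, Matrix.exp_conj U _ (Matrix.isUnit_iff_isUnit_det U |>.mpr
      (IsUnit.of_mul_eq_one _ (by rw [← Matrix.det_mul, hUs, Matrix.det_one])))]
    rw [Matrix.exp_diagonal, hUinv, Pi.exp_def]
    congr 2
    funext i
    rw [Real.exp_eq_exp_ℝ]
  set g : ι → ℝ := fun i => Real.exp (-(hH.eigenvalues i)) with hg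
  set y : ι → ℝ := (star U) *ᵥ x with hy
  have h1 : (NormedSpace.exp (-M)) *ᵥ x = U *ᵥ (Matrix.diagonal g *ᵥ y) := by
    rw [hexp, ← Matrix.mulVec_mulVec, ← Matrix.mulVec_mulVec]
  have hUdot : ∀ w : ι → ℝ, (U *ᵥ w) ⬝ᵥ (U *ᵥ w) = w ⬝ᵥ w := by
    intro w
    rw [dot_mulVec_same, show Uᵀ = star U from rfl, hsU, Matrix.one_mulVec]
  have hUsdot : y ⬝ᵥ y = x ⬝ᵥ x := by
    rw [hy, dot_mulVec_same, show (star U)ᵀ = U from ?_, hUs, Matrix.one_mulVec]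
    · simp [Matrix.star_eq_conjTranspose, Matrix.conjTranspose]
      rfl
  rw [h1, hUdot, ← hUsdot]
  have hdiag : Matrix.diagonal g *ᵥ y = fun i => g i * y i := by
    funext i; rw [Matrix.mulVec_diagonal]
  rw [hdiag]
  unfold dotProduct
  apply Finset.sum_le_sum
  intro i _
  have hgi : 0 < g i := Real.exp_pos _
  have hgi1 : g i ≤ 1 := by
    rw [hg]
    exact Real.exp_le_one_iff.mpr (neg_nonpos.mpr (hM.eigenvalues_nonneg i))
  have h2 : (g i * y i) * (g i * y i) = (g i)^2 * (y i * y i) := by ring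
  rw [h2]
  have hsq : (g i)^2 ≤ 1 := by nlinarith
  calc (g i)^2 * (y i * y i) ≤ 1 * (y i * y i) :=
        mul_le_mul_of_nonneg_right hsq (mul_self_nonneg _)
    _ = y i * y i := one_mul _

end Aux

section Aux2
variable {ι : Type*} [Fintype ι] [DecidableEq ι]

omit [DecidableEq ι] in
lemma posSemidef_smul' {M : Matrix ι ι ℝ} (hM : M.PosSemidef) {t : ℝ} (ht : 0 ≤ t) :
    (t • M).PosSemidef := by
  constructor
  · show (t • M)ᴴ = t • M
    rw [Matrix.conjTranspose_smul, hM.1.eq]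
    simp
  · intro x
    have h := hM.2 x
    exact (hM.smul ht).2 x
end Aux2

/-- For a switched matrix-weighted network with Laplacians `L^k`
(symmetric PSD, `R ⊆ null(L^k)`) and dwell times `Δt k ∈ [α, β]`, `0 < α ≤ β`:
if there is a strictly increasing index sequence `k_0 = 0 < k_1 < ⋯` with
`null(∑_{k=k_l}^{k_{l+1}-1} Δt_k L^k) = R` for every `l`, and a scalar `0 < q < 1`
such that every transition matrix `Φ_l` over `[k_l, k_{l+1})` satisfies
`‖Φ_l x‖² ≤ q ‖x‖²` for all `x ⊥ R` (i.e. `μ_{d+1}(Φ_lᵀ Φ_l) ≤ q`), then every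
initial state converges to its average consensus value. -/
theorem null_subsequence_contraction_implies_average_consensus
    {n d : ℕ} (hn : 2 ≤ n) (hd : 1 ≤ d)
    (L : ℕ → Matrix (Fin n × Fin d) (Fin n × Fin d) ℝ) (Δt : ℕ → ℝ) (α β : ℝ)
    (hα : 0 < α) (hαβ : α ≤ β) (hΔ : ∀ k, Δt k ∈ Set.Icc α β)
    (hpsd : ∀ k, (L k).PosSemidef)
    (hR : ∀ k, ∀ x : Fin n × Fin d → ℝ, isConsensus x → (L k).mulVec x = 0)
    (ks : ℕ → ℕ) (hks0 : ks 0 = 0) (hksmono : StrictMono ks)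
    (hnull : ∀ l : ℕ, ∀ x : Fin n × Fin d → ℝ,
      ((∑ k ∈ Finset.Ico (ks l) (ks (l + 1)), Δt k • L k).mulVec x = 0
        ↔ isConsensus x))
    (q : ℝ) (hq0 : 0 < q) (hq1 : q < 1)
    (hcontr : ∀ l : ℕ, ∀ x : Fin n × Fin d → ℝ,
      (∀ y : Fin n × Fin d → ℝ, isConsensus y → x ⬝ᵥ y = 0) →
      ((transMat (fun k => NormedSpace.exp (-(Δt k • L k))) (ks l)
          (ks (l + 1) - ks l)).mulVec x) ⬝ᵥ
        ((transMat (fun k => NormedSpace.exp (-(Δt k • L k))) (ks l)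
          (ks (l + 1) - ks l)).mulVec x) ≤ q * (x ⬝ᵥ x)) :
    ∀ x0 : Fin n × Fin d → ℝ,
      Tendsto (stateSeq (fun k => NormedSpace.exp (-(Δt k • L k))) x0) atTop
        (nhds (fun p => (n : ℝ)⁻¹ * ∑ i : Fin n, x0 (i, p.2))) := by
  intro x0
  set E : ℕ → Matrix (Fin n × Fin d) (Fin n × Fin d) ℝ :=
    fun k => NormedSpace.exp (-(Δt k • L k)) with hE
  have hΔpos : ∀ k, 0 ≤ Δt k := fun k => le_trans hα.le (hΔ k).1
  have hMpsd : ∀ k, (Δt k • L k).PosSemidef := fun k => posSemidef_smul' (hpsd k) (hΔpos k)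
  have hEfix : ∀ k (c : Fin n × Fin d → ℝ), isConsensus c → E k *ᵥ c = c := by
    intro k c hc
    apply exp_mulVec_of_mulVec_eq_zero
    rw [Matrix.neg_mulVec, Matrix.smul_mulVec, hR k c hc, smul_zero, neg_zero]
  have hEsymm : ∀ k, (E k)ᵀ = E k := by
    intro k
    rw [hE]
    simp only
    rw [← Matrix.exp_transpose]
    congr 1
    rw [Matrix.transpose_neg, Matrix.transpose_smul]
    congr 1
    have := (hpsd k).1.eq
    rw [Matrix.conjTranspose_eq_transpose_of_trivial] at this
    rw [this]
  set c : Fin n × Fin d → ℝ := fun p => (n : ℝ)⁻¹ * ∑ i : Fin n, x0 (i, p.2) with hc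
  have hcc : isConsensus c := ⟨fun j => (n : ℝ)⁻¹ * ∑ i : Fin n, x0 (i, j), fun p => rfl⟩
  set z : ℕ → Fin n × Fin d → ℝ := fun k => stateSeq E x0 k - c with hz
  have hstate : ∀ k, stateSeq E x0 k = z k + c := by
    intro k; rw [hz]; simp
  have hzrec : ∀ k, z (k + 1) = E k *ᵥ z k := by
    intro k
    have h1 : stateSeq E x0 (k + 1) = E k *ᵥ stateSeq E x0 k := rfl
    rw [hz]
    simp only
    rw [h1, hstate k, Matrix.mulVec_add, hEfix k c hcc]
    simp
  have hn0 : (n : ℝ) ≠ 0 := Nat.cast_ne_zero.mpr (by omega)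
  have hperp : ∀ k, ∀ y : Fin n × Fin d → ℝ, isConsensus y → z k ⬝ᵥ y = 0 := by
    intro k
    induction k with
    | zero =>
      intro y hy
      obtain ⟨v, hv⟩ := hy
      have hz0 : z 0 = x0 - c := rfl
      rw [hz0]
      have hdot : (x0 - c) ⬝ᵥ y = ∑ p : Fin n × Fin d, (x0 p - c p) * v p.2 := by
        unfold dotProduct
        exact Finset.sum_congr rfl fun p _ => by rw [hv p]; rfl
      rw [hdot, Fintype.sum_prod_type_right]
      apply Finset.sum_eq_zero
      intro j _
      have hterm : ∀ i : Fin n, (x0 (i, j) - c (i, j)) * v j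
          = x0 (i, j) * v j - ((n : ℝ)⁻¹ * ∑ i' : Fin n, x0 (i', j)) * v j := fun i => by
        rw [hc]; ring
      rw [Finset.sum_congr rfl (fun i _ => hterm i), Finset.sum_sub_distrib,
        ← Finset.sum_mul, Finset.sum_const, Finset.card_univ, Fintype.card_fin,
        nsmul_eq_mul]
      field_simp
      ring
    | succ k ih =>
      intro y hy
      rw [hzrec k, dot_mulVec_left, hEsymm k, hEfix k y hy, ih y hy]
  set N : ℕ → ℝ := fun k => z k ⬝ᵥ z k with hN
  have hNnonneg : ∀ k, 0 ≤ N k := fun k => Finset.sum_nonneg fun i _ => mul_self_nonneg _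
  have hNdec : ∀ k, N (k + 1) ≤ N k := by
    intro k
    rw [hN]
    simp only
    rw [hzrec k, hE]
    exact exp_neg_psd_nonexpansive (hMpsd k) (z k)
  have hNanti : Antitone N := antitone_nat_of_succ_le hNdec
  have hztrans : ∀ a j, z (a + j) = transMat E a j *ᵥ z a := by
    intro a j
    induction j with
    | zero => simp [transMat, Matrix.one_mulVec]
    | succ j ih =>
      show z ((a + j) + 1) = _
      rw [hzrec, ih, transMat, Matrix.mulVec_mulVec]
  have hNcontr : ∀ l, N (ks (l + 1)) ≤ q * N (ks l) := by
    intro l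
    have hle : ks l ≤ ks (l + 1) := (hksmono (Nat.lt_succ_self l)).le
    have heq : ks l + (ks (l + 1) - ks l) = ks (l + 1) := Nat.add_sub_cancel' hle
    have h2 : z (ks (l + 1)) = transMat E (ks l) (ks (l + 1) - ks l) *ᵥ z (ks l) := by
      conv_lhs => rw [← heq]
      exact hztrans _ _
    have := hcontr l (z (ks l)) (hperp (ks l))
    rw [hN]
    simp only
    rw [h2]
    exact this
  have hNq : ∀ l, N (ks l) ≤ q ^ l * N 0 := by
    intro l
    induction l with
    | zero => simp [hks0]
    | succ l ih =>
      calc N (ks (l + 1)) ≤ q * N (ks l) := hNcontr l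
        _ ≤ q * (q ^ l * N 0) := mul_le_mul_of_nonneg_left ih hq0.le
        _ = q ^ (l + 1) * N 0 := by ring
  have hN0 : Tendsto N atTop (nhds 0) := by
    rw [Metric.tendsto_atTop]
    intro ε hε
    have hq' : Tendsto (fun l => q ^ l * N 0) atTop (nhds 0) := by
      simpa using (tendsto_pow_atTop_nhds_zero_of_lt_one hq0.le hq1).mul_const (N 0)
    obtain ⟨l, hl⟩ := Metric.tendsto_atTop.mp hq' ε hε
    refine ⟨ks l, fun k hk => ?_⟩
    have h1 : N k ≤ N (ks l) := hNanti hk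
    have h2 : q ^ l * N 0 < ε := by
      have h3 := hl l le_rfl
      rwa [Real.dist_eq, sub_zero,
        abs_of_nonneg (mul_nonneg (pow_nonneg hq0.le l) (hNnonneg 0))] at h3
    rw [Real.dist_eq, sub_zero, abs_of_nonneg (hNnonneg k)]
    exact lt_of_le_of_lt (le_trans h1 (hNq l)) h2
  rw [tendsto_pi_nhds]
  intro p
  have hzp : Tendsto (fun k => z k p) atTop (nhds 0) := by
    apply squeeze_zero_norm (a := fun k => Real.sqrt (N k))
    · intro k
      rw [Real.norm_eq_abs, ← Real.sqrt_sq_eq_abs]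
      apply Real.sqrt_le_sqrt
      rw [sq]
      exact Finset.single_le_sum (f := fun r => z k r * z k r)
        (fun i _ => mul_self_nonneg _) (Finset.mem_univ p)
    · have hsq : Tendsto Real.sqrt (nhds 0) (nhds 0) := by
        simpa using (Real.continuous_sqrt.tendsto 0)
      exact hsq.comp hN0
  have heq : ∀ k, stateSeq E x0 k p = z k p + c p := by
    intro k; rw [hstate k]; rfl
  simp only [heq]
  simpa using hzp.add_const (c p)
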